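/- Let S ⊂ ℝ be a subring finitely generated as a ℤ-module with field of fractions K, let Γ ⊂ ℝⁿ be a free S-module of rank n spanning ℝⁿ with S-basis {γ₁,…,γₙ}. If for every non-zero γ ∈ Γ the reflection ρ_γ is a coincidence isometry of Γ, then ⟨γᵢ,γⱼ⟩/⟨γₖ,γₖ⟩ ∈ K for all 1 ≤ i,j,k ≤ n. -/

import Mathlib

open Matrix

/-- Two additive subgroups of `ℝⁿ` are commensurate if their intersection has
finite index in both. -/
def Commensurate {n : ℕ} (Γ Γ' : AddSubgroup (Fin n → ℝ)) : Prop :=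
  (Γ'.addSubgroupOf Γ).index ≠ 0 ∧ (Γ.addSubgroupOf Γ').index ≠ 0

/-- The matrix of the reflection `ρ_γ : x ↦ x - 2(⟨x,γ⟩/⟨γ,γ⟩)γ` along `γ`. -/
noncomputable def reflMatrix {n : ℕ} (γ : Fin n → ℝ) : Matrix (Fin n) (Fin n) ℝ :=
  1 - (2 / dotProduct γ γ) • Matrix.vecMulVec γ γ

/-- `Q` (acting on `ℝⁿ` by `x ↦ Q.mulVec x`) is a coincidence isometry of `Γ`:
it is orthogonal and `Γ` is commensurate with its image `Q(Γ)`. -/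
def IsCoincidenceIsometry {n : ℕ} (Γ : AddSubgroup (Fin n → ℝ))
    (Q : Matrix (Fin n) (Fin n) ℝ) : Prop :=
  Q ∈ Matrix.orthogonalGroup (Fin n) ℝ ∧
    Commensurate Γ (Γ.map Q.mulVecLin.toAddMonoidHom)

/-- `Q` is a product of at most `n` reflections along non-zero elements of `Γ`. -/
def IsProdOfAtMostNCoincReflections {n : ℕ} (Γ : AddSubgroup (Fin n → ℝ))
    (Q : Matrix (Fin n) (Fin n) ℝ) : Prop :=
  ∃ k : ℕ, k ≤ n ∧ ∃ g : Fin k → (Fin n → ℝ), (∀ i, g i ∈ Γ ∧ g i ≠ 0) ∧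
    Q = (List.ofFn fun i => reflMatrix (g i)).prod

/-- `b` is an `S`-basis of `Γ` which is also an `ℝ`-basis of `ℝⁿ`; i.e. `Γ` is
a free `S`-module of rank `n` spanning `ℝⁿ` with basis `b`. -/
def IsSBasisOf {n : ℕ} (S : Subring ℝ) (b : Fin n → (Fin n → ℝ))
    (Γ : AddSubgroup (Fin n → ℝ)) : Prop :=
  LinearIndependent ℝ b ∧ Submodule.span ℝ (Set.range b) = ⊤ ∧
    ∀ x, x ∈ Γ ↔ ∃ c : Fin n → ℝ, (∀ i, c i ∈ S) ∧ x = ∑ i, c i • b i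

lemma reflMatrix_mulVec {n : ℕ} (γ x : Fin n → ℝ) :
    (reflMatrix γ) *ᵥ x = x - (2 * dotProduct x γ / dotProduct γ γ) • γ := by
  have hvm : (Matrix.vecMulVec γ γ) *ᵥ x = (dotProduct γ x) • γ := by
    ext i
    simp only [mulVec, vecMulVec_apply, dotProduct, Pi.smul_apply, smul_eq_mul,
      Finset.sum_mul]
    exact Finset.sum_congr rfl fun j _ => by ring
  rw [reflMatrix, Matrix.sub_mulVec, Matrix.one_mulVec, Matrix.smul_mulVec, hvm,
    smul_smul, dotProduct_comm γ x]
  congr 2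
  ring

lemma key_lemma {n : ℕ} (S : Subring ℝ) (K : Subfield ℝ)
    (hK : ∀ x : ℝ, x ∈ K ↔ ∃ a b : ℝ, a ∈ S ∧ b ∈ S ∧ b ≠ 0 ∧ x = a / b)
    (Γ : AddSubgroup (Fin n → ℝ)) (b : Fin n → (Fin n → ℝ)) (hb : IsSBasisOf S b Γ)
    (hrefl : ∀ γ ∈ Γ, γ ≠ 0 → IsCoincidenceIsometry Γ (reflMatrix γ))
    (γ d : Fin n → ℝ) (hd : ∀ l, d l ∈ S) (hγ : γ = ∑ l, d l • b l) (hγ0 : γ ≠ 0)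
    (j l : Fin n) :
    2 * dotProduct (b j) γ / dotProduct γ γ * d l ∈ K := by
  obtain ⟨hli, -, hmem⟩ := hb
  have hγΓ : γ ∈ Γ := (hmem γ).2 ⟨d, hd, hγ⟩
  have hbΓ : b j ∈ Γ := (hmem (b j)).2 ⟨fun i => if i = j then 1 else 0,
    fun i => by dsimp only; split
                · exact S.one_mem
                · exact S.zero_mem,
    by simp [ite_smul]⟩
  obtain ⟨-, -, hidx⟩ := hrefl γ hγΓ hγ0
  set Γ' := Γ.map (reflMatrix γ).mulVecLin.toAddMonoidHom with hΓ'
  set N := (Γ.addSubgroupOf Γ').index with hN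
  set t := 2 * dotProduct (b j) γ / dotProduct γ γ with ht
  have hy' : (reflMatrix γ) *ᵥ (b j) ∈ Γ' := ⟨b j, hbΓ, rfl⟩
  have hNy : N • ((reflMatrix γ) *ᵥ (b j)) ∈ Γ := by
    have h := AddSubgroup.nsmul_index_mem (Γ.addSubgroupOf Γ') (⟨_, hy'⟩ : Γ')
    rw [AddSubgroup.mem_addSubgroupOf] at h
    simpa using h
  obtain ⟨c, hc, hceq⟩ := (hmem _).1 hNy
  have hNne : (N : ℝ) ≠ 0 := Nat.cast_ne_zero.2 hidx
  have hsum : ∑ i, (((N : ℝ) * (if i = j then 1 else 0) - (N : ℝ) * t * d i) - c i) • b i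
      = 0 := by
    simp only [sub_smul, Finset.sum_sub_distrib]
    have h1 : ∑ i, ((N : ℝ) * (if i = j then 1 else 0)) • b i = (N : ℝ) • b j := by
      simp [mul_ite, mul_one, mul_zero, ite_smul, zero_smul]
    have h2 : ∑ i, ((N : ℝ) * t * d i) • b i = ((N : ℝ) * t) • γ := by
      rw [hγ, Finset.smul_sum]
      exact Finset.sum_congr rfl fun i _ => by rw [smul_smul]
    have h3 : ∑ i, c i • b i = N • ((reflMatrix γ) *ᵥ (b j)) := hceq.symm
    rw [h1, h2, h3, reflMatrix_mulVec, ← ht, ← Nat.cast_smul_eq_nsmul ℝ, smul_sub,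
      smul_smul]
    abel
  have he := Fintype.linearIndependent_iff.1 hli _ hsum l
  refine (hK _).2 ⟨(N : ℝ) * (if l = j then 1 else 0) - c l, (N : ℝ),
    sub_mem (mul_mem (natCast_mem S N)
      (by split
          · exact S.one_mem
          · exact S.zero_mem)) (hc l), natCast_mem S N,
    hNne, ?_⟩
  rw [eq_div_iff hNne]
  linear_combination -he

theorem stmt14 {n : ℕ} (S : Subring ℝ) (hS : Module.Finite ℤ S)
    (K : Subfield ℝ)
    (hK : ∀ x : ℝ, x ∈ K ↔ ∃ a b : ℝ, a ∈ S ∧ b ∈ S ∧ b ≠ 0 ∧ x = a / b)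
    (Γ : AddSubgroup (Fin n → ℝ)) (b : Fin n → (Fin n → ℝ)) (hb : IsSBasisOf S b Γ)
    (hrefl : ∀ γ ∈ Γ, γ ≠ 0 → IsCoincidenceIsometry Γ (reflMatrix γ)) :
    ∀ i j k, dotProduct (b i) (b j) / dotProduct (b k) (b k) ∈ K := by
  have hli := hb.1
  have hbne : ∀ i, b i ≠ 0 := fun i => hli.ne_zero i
  have hself : ∀ i, dotProduct (b i) (b i) ≠ 0 := fun i =>
    fun h => hbne i (dotProduct_self_eq_zero.1 h)
  have h2S : (2 : ℝ) ∈ S := by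
    have h : (2 : ℝ) = 1 + 1 := by norm_num
    rw [h]; exact S.add_mem S.one_mem S.one_mem
  have h2K : (2 : ℝ) ∈ K := (hK 2).2 ⟨2, 1, h2S, S.one_mem, one_ne_zero, by norm_num⟩
  -- step (a): ⟨b j, b k⟩ / ⟨b k, b k⟩ ∈ K
  have stepa : ∀ j k, dotProduct (b j) (b k) / dotProduct (b k) (b k) ∈ K := by
    intro j k
    have hk := key_lemma S K hK Γ b hb hrefl (b k) (fun i => if i = k then 1 else 0)
      (fun i => by split
                   · exact S.one_mem
                   · exact S.zero_mem)
      (by simp [ite_smul]) (hbne k) j k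
    rw [if_pos rfl, mul_one] at hk
    have : dotProduct (b j) (b k) / dotProduct (b k) (b k)
        = (2 * dotProduct (b j) (b k) / dotProduct (b k) (b k)) / 2 := by ring
    rw [this]
    exact K.div_mem hk h2K
  -- step (b): ⟨b i, b i⟩ / ⟨b k, b k⟩ ∈ K
  have stepb : ∀ i k, dotProduct (b i) (b i) / dotProduct (b k) (b k) ∈ K := by
    intro i k
    rcases eq_or_ne i k with rfl | hik
    · rw [div_self (hself i)]; exact K.one_mem
    rcases eq_or_ne (dotProduct (b i) (b k)) 0 with hB | hB
    · -- use reflection along γ = b i + b k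
      set γ : Fin n → ℝ := b i + b k with hγdef
      have hγeq : γ = ∑ l, (((if l = i then 1 else 0) : ℝ) + if l = k then 1 else 0) • b l := by
        simp [add_smul, ite_smul, Finset.sum_add_distrib, hγdef]
      have hdotiγ : dotProduct (b i) γ = dotProduct (b i) (b i) := by
        simp [hγdef, dotProduct_add, hB]
      have hdotkγ : dotProduct (b k) γ = dotProduct (b k) (b k) := by
        rw [hγdef, dotProduct_add, dotProduct_comm (b k) (b i), hB, zero_add]
      have hγ0 : γ ≠ 0 := by
        intro h
        apply hself i
        rw [← hdotiγ, h, dotProduct_zero]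
      have hγγ : dotProduct γ γ ≠ 0 := fun h => hγ0 (dotProduct_self_eq_zero.1 h)
      have hdmem : ∀ l, (((if l = i then 1 else 0) : ℝ) + if l = k then 1 else 0) ∈ S :=
        fun l => S.add_mem
          (by split
              · exact S.one_mem
              · exact S.zero_mem)
          (by split
              · exact S.one_mem
              · exact S.zero_mem)
      have hti := key_lemma S K hK Γ b hb hrefl γ _ hdmem hγeq hγ0 i i
      have htk := key_lemma S K hK Γ b hb hrefl γ _ hdmem hγeq hγ0 k k
      rw [if_pos rfl, if_neg hik, add_zero, mul_one, hdotiγ] at hti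
      rw [if_neg (Ne.symm hik), if_pos rfl, zero_add, mul_one, hdotkγ] at htk
      have hsne : 2 * dotProduct (b k) (b k) / dotProduct γ γ ≠ 0 :=
        div_ne_zero (mul_ne_zero two_ne_zero (hself k)) hγγ
      have hCk := hself k
      have heq : dotProduct (b i) (b i) / dotProduct (b k) (b k)
          = (2 * dotProduct (b i) (b i) / dotProduct γ γ)
            / (2 * dotProduct (b k) (b k) / dotProduct γ γ) := by
        rw [div_div_div_eq]
        rw [div_eq_div_iff hCk (by positivity)]
        ring
      rw [heq]
      exact K.div_mem hti htk
    · have h1 := stepa i k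
      have h2 : dotProduct (b i) (b k) / dotProduct (b i) (b i) ∈ K := by
        rw [dotProduct_comm]; exact stepa k i
      have hA := hself i
      have hC := hself k
      have heq : dotProduct (b i) (b i) / dotProduct (b k) (b k)
          = (dotProduct (b i) (b k) / dotProduct (b k) (b k))
            / (dotProduct (b i) (b k) / dotProduct (b i) (b i)) := by
        rw [div_div_div_eq, div_eq_div_iff hC (mul_ne_zero hC hB)]
        ring
      rw [heq]
      exact K.div_mem h1 h2
  intro i j k
  have heq : dotProduct (b i) (b j) / dotProduct (b k) (b k)
      = (dotProduct (b i) (b j) / dotProduct (b j) (b j))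
        * (dotProduct (b j) (b j) / dotProduct (b k) (b k)) := by
    rw [div_mul_div_comm, div_eq_div_iff (hself k) (mul_ne_zero (hself j) (hself k))]
    ring
  rw [heq]
  exact K.mul_mem (stepa i j) (stepb j k)
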